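/- There is an absolute constant c such that for every a, b ∈ R^n, every p ≥ 1, every I ⊂ {1,...,n}, and the partition I = ∪_ℓ I_ℓ where I_1 consists of the indices of the p largest values of (|a_i|)_{i∈I}, I_2 the next p largest, and so on, one has (E | Σ_{i∈I} ε_i a_i b_i |^p)^{1/p} ≤ c ‖a‖_2 · max_ℓ ‖proj_{I_ℓ} b‖_2, where ε_1,...,ε_n are independent Rademacher signs. -/

import Mathlib

open scoped BigOperators

open Finset in
/-- MGF bound for a Rademacher sum, in discrete form. -/
lemma mgf_bound {n : ℕ} (x : Fin n → ℝ) (T : Finset (Fin n)) (l : ℝ) :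
    ∑ ε : Fin n → Bool, Real.exp (l * ∑ i ∈ T, (if ε i then (1:ℝ) else -1) * x i)
      ≤ 2 ^ n * Real.exp (l ^ 2 * (∑ i ∈ T, x i ^ 2) / 2) := by
  classical
  set y : Fin n → ℝ := fun i => if i ∈ T then x i else 0 with hy
  have hsum : ∀ ε : Fin n → Bool,
      ∑ i ∈ T, (if ε i then (1:ℝ) else -1) * x i
        = ∑ i : Fin n, (if ε i then (1:ℝ) else -1) * y i := by
    intro ε
    rw [show ∑ i ∈ T, (if ε i then (1:ℝ) else -1) * x i
        = ∑ i ∈ T, (if ε i then (1:ℝ) else -1) * y i from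
      Finset.sum_congr rfl fun i hi => by simp [hy, hi]]
    exact Finset.sum_subset (Finset.subset_univ T) (fun i _ hi => by simp [hy, hi])
  have hy2 : ∑ i : Fin n, y i ^ 2 = ∑ i ∈ T, x i ^ 2 := by
    rw [← Finset.sum_subset (Finset.subset_univ T) (fun i _ hi => by simp [hy, hi])]
    exact Finset.sum_congr rfl fun i hi => by simp [hy, hi]
  set g : Fin n → Bool → ℝ := fun i c => Real.exp (l * ((if c then (1:ℝ) else -1) * y i))
    with hg
  have hswap : ∑ ε : Fin n → Bool, ∏ i : Fin n, g i (ε i)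
      = ∏ i : Fin n, ∑ c : Bool, g i c := by
    have h := Finset.sum_prod_piFinset (Finset.univ : Finset Bool) g
    rwa [Fintype.piFinset_univ] at h
  calc ∑ ε : Fin n → Bool, Real.exp (l * ∑ i ∈ T, (if ε i then (1:ℝ) else -1) * x i)
      = ∑ ε : Fin n → Bool, ∏ i : Fin n, g i (ε i) := by
        refine Finset.sum_congr rfl fun ε _ => ?_
        rw [hsum ε, Finset.mul_sum, Real.exp_sum]
    _ = ∏ i : Fin n, ∑ c : Bool, g i c := hswap
    _ = ∏ i : Fin n, (Real.exp (l * y i) + Real.exp (-(l * y i))) := by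
        refine Finset.prod_congr rfl fun i _ => ?_
        rw [Fintype.sum_bool]
        simp [hg, mul_neg, neg_one_mul]
    _ ≤ ∏ i : Fin n, 2 * Real.exp ((l * y i) ^ 2 / 2) := by
        refine Finset.prod_le_prod (fun i _ => by positivity) fun i _ => ?_
        have h := Real.cosh_le_exp_half_sq (l * y i)
        rw [Real.cosh_eq] at h
        linarith
    _ = 2 ^ n * Real.exp (∑ i : Fin n, (l * y i) ^ 2 / 2) := by
        rw [Finset.prod_mul_distrib, Finset.prod_const, ← Real.exp_sum]
        simp
    _ = 2 ^ n * Real.exp (l ^ 2 * (∑ i ∈ T, x i ^ 2) / 2) := by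
        rw [← hy2]
        congr 1
        simp only [mul_pow]
        rw [← Finset.sum_div, ← Finset.mul_sum]

/-- Pointwise moment bound from the exponential. -/
lemma abs_pow_le_exp {t l : ℝ} (hl : 0 < l) (p : ℕ) :
    |t| ^ p ≤ (p.factorial : ℝ) / l ^ p * (Real.exp (l * t) + Real.exp (-(l * t))) := by
  have h1 : (l * |t|) ^ p ≤ (p.factorial : ℝ) * Real.exp (l * |t|) := by
    have h2 : (l * |t|) ^ p / (p.factorial : ℝ)
        ≤ ∑ i ∈ Finset.range (p + 1), (l * |t|) ^ i / (i.factorial : ℝ) :=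
      Finset.single_le_sum (f := fun i => (l * |t|) ^ i / (i.factorial : ℝ))
        (fun i _ => by positivity) (Finset.self_mem_range_succ p)
    have h3 := Real.sum_le_exp_of_nonneg (mul_nonneg hl.le (abs_nonneg t)) (p + 1)
    have hfac : (0:ℝ) < (p.factorial : ℝ) := by exact_mod_cast p.factorial_pos
    rw [div_le_iff₀ hfac] at h2
    calc (l * |t|) ^ p
        ≤ (∑ i ∈ Finset.range (p + 1), (l * |t|) ^ i / (i.factorial : ℝ)) * p.factorial := by
          linarith
      _ ≤ Real.exp (l * |t|) * p.factorial := by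
          apply mul_le_mul_of_nonneg_right h3 hfac.le
      _ = (p.factorial : ℝ) * Real.exp (l * |t|) := by ring
  have h3 : Real.exp (l * |t|) ≤ Real.exp (l * t) + Real.exp (-(l * t)) := by
    rcases abs_cases t with ⟨h, _⟩ | ⟨h, _⟩
    · rw [h]; have := Real.exp_pos (-(l * t)); linarith
    · rw [h, mul_neg]
      have := Real.exp_pos (l * t); linarith
  have hlp : (0:ℝ) < l ^ p := pow_pos hl p
  rw [div_mul_eq_mul_div, le_div_iff₀ hlp]
  calc |t| ^ p * l ^ p = (l * |t|) ^ p := by rw [mul_pow]; ring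
    _ ≤ (p.factorial : ℝ) * Real.exp (l * |t|) := h1
    _ ≤ (p.factorial : ℝ) * (Real.exp (l * t) + Real.exp (-(l * t))) := by
        apply mul_le_mul_of_nonneg_left h3 (by positivity)

/-- Extracting the `p`-th root. -/
lemma moment_root_le {n p : ℕ} {X C : ℝ} (hC : 0 ≤ C) (hp : p ≠ 0)
    (h : X / 2 ^ n ≤ C ^ p) (hX : 0 ≤ X) :
    (X / 2 ^ n) ^ ((p : ℝ)⁻¹) ≤ C := by
  calc (X / 2 ^ n) ^ ((p : ℝ)⁻¹) ≤ (C ^ p) ^ ((p : ℝ)⁻¹) :=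
        Real.rpow_le_rpow (by positivity) h (by positivity)
    _ = C := Real.pow_rpow_inv_natCast hC hp

/-- Khintchine inequality, discrete form, with constant `4 √p`. -/
lemma khintchine {n : ℕ} (x : Fin n → ℝ) (T : Finset (Fin n)) {p : ℕ} (hp : 1 ≤ p) :
    ((∑ ε : Fin n → Bool, |∑ i ∈ T, (if ε i then (1:ℝ) else -1) * x i| ^ (p : ℝ)) / 2 ^ n)
        ^ ((p : ℝ)⁻¹)
      ≤ 4 * Real.sqrt p * Real.sqrt (∑ i ∈ T, x i ^ 2) := by
  classical
  have hp0 : p ≠ 0 := by omega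
  set S : (Fin n → Bool) → ℝ := fun ε => ∑ i ∈ T, (if ε i then (1:ℝ) else -1) * x i with hS
  set σ2 : ℝ := ∑ i ∈ T, x i ^ 2 with hσ2
  have hσ2nn : 0 ≤ σ2 := Finset.sum_nonneg fun i _ => sq_nonneg _
  have hrw : ∀ ε : Fin n → Bool, |S ε| ^ (p : ℝ) = |S ε| ^ p := fun ε =>
    Real.rpow_natCast _ p
  have hXnn : 0 ≤ ∑ ε : Fin n → Bool, |S ε| ^ (p : ℝ) :=
    Finset.sum_nonneg fun ε _ => Real.rpow_nonneg (abs_nonneg _) _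
  rcases eq_or_lt_of_le hσ2nn with hzero | hpos
  · -- degenerate case : all x i = 0 on T
    have hx0 : ∀ i ∈ T, x i = 0 := by
      intro i hi
      have := (Finset.sum_eq_zero_iff_of_nonneg (fun j _ => sq_nonneg (x j))).1 hzero.symm i hi
      exact pow_eq_zero_iff (two_ne_zero) |>.1 this
    have hS0 : ∀ ε : Fin n → Bool, S ε = 0 := fun ε =>
      Finset.sum_eq_zero fun i hi => by rw [hx0 i hi]; ring
    have : (∑ ε : Fin n → Bool, |S ε| ^ (p : ℝ)) = 0 :=
      Finset.sum_eq_zero fun ε _ => by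
        rw [hS0 ε, abs_zero, Real.zero_rpow (by exact_mod_cast hp0)]
    rw [this, zero_div, Real.zero_rpow (by positivity)]
    positivity
  · set l : ℝ := Real.sqrt p / Real.sqrt σ2 with hl
    have hsp : (0:ℝ) < Real.sqrt p := Real.sqrt_pos.2 (by exact_mod_cast hp0.bot_lt)
    have hsσ : (0:ℝ) < Real.sqrt σ2 := Real.sqrt_pos.2 hpos
    have hlpos : 0 < l := div_pos hsp hsσ
    have hl2 : l ^ 2 * σ2 = p := by
      rw [hl, div_pow, Real.sq_sqrt (by positivity), Real.sq_sqrt hσ2nn]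
      field_simp
    -- main moment bound
    have hmom : ∑ ε : Fin n → Bool, |S ε| ^ p
        ≤ (p.factorial : ℝ) / l ^ p * (2 ^ (n + 1) * Real.exp (p / 2)) := by
      calc ∑ ε : Fin n → Bool, |S ε| ^ p
          ≤ ∑ ε : Fin n → Bool, (p.factorial : ℝ) / l ^ p
              * (Real.exp (l * S ε) + Real.exp (-(l * S ε))) :=
            Finset.sum_le_sum fun ε _ => abs_pow_le_exp hlpos p
        _ = (p.factorial : ℝ) / l ^ p * ((∑ ε : Fin n → Bool, Real.exp (l * S ε))
              + ∑ ε : Fin n → Bool, Real.exp (-(l * S ε))) := by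
            rw [← Finset.mul_sum, Finset.sum_add_distrib]
        _ ≤ (p.factorial : ℝ) / l ^ p * (2 ^ n * Real.exp (l ^ 2 * σ2 / 2)
              + 2 ^ n * Real.exp (l ^ 2 * σ2 / 2)) := by
            apply mul_le_mul_of_nonneg_left _ (by positivity)
            apply add_le_add
            · exact mgf_bound x T l
            · calc ∑ ε : Fin n → Bool, Real.exp (-(l * S ε))
                  = ∑ ε : Fin n → Bool, Real.exp ((-l) * S ε) := by
                    refine Finset.sum_congr rfl fun ε _ => by ring_nf
                _ ≤ 2 ^ n * Real.exp ((-l) ^ 2 * σ2 / 2) := mgf_bound x T (-l)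
                _ = 2 ^ n * Real.exp (l ^ 2 * σ2 / 2) := by rw [neg_pow]; ring_nf
        _ = (p.factorial : ℝ) / l ^ p * (2 ^ (n + 1) * Real.exp (p / 2)) := by
            rw [hl2]
            ring
    -- convert to the final bound
    have hC : (0:ℝ) ≤ 4 * Real.sqrt p * Real.sqrt σ2 := by positivity
    have hkey : (∑ ε : Fin n → Bool, |S ε| ^ (p : ℝ)) / 2 ^ n
        ≤ (4 * Real.sqrt p * Real.sqrt σ2) ^ p := by
      have h2n : (0:ℝ) < 2 ^ n := by positivity
      rw [div_le_iff₀ h2n]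
      have hrw' : (∑ ε : Fin n → Bool, |S ε| ^ (p : ℝ))
          = ∑ ε : Fin n → Bool, |S ε| ^ p := Finset.sum_congr rfl fun ε _ => hrw ε
      rw [hrw']
      refine hmom.trans ?_
      -- arithmetic : (p!/l^p) * 2^{n+1} e^{p/2} ≤ (4 √p √σ2)^p * 2^n
      set u : ℝ := Real.sqrt p ^ p with hu
      set v : ℝ := Real.sqrt σ2 ^ p with hv
      have hupos : 0 < u := pow_pos hsp p
      have hvpos : 0 < v := pow_pos hsσ p
      have huu : u * u = (p : ℝ) ^ p := by
        rw [hu, ← pow_add, ← two_mul, pow_mul, Real.sq_sqrt (by positivity)]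
      have hlp : l ^ p = u / v := by rw [hl, div_pow]
      have hfact : (p.factorial : ℝ) ≤ (p : ℝ) ^ p := by exact_mod_cast p.factorial_le_pow
      have hehalf : Real.exp (1 / 2) ≤ 2 := by
        have h1 : Real.exp (1/2) * Real.exp (1/2) = Real.exp 1 := by
          rw [← Real.exp_add]; norm_num
        nlinarith [Real.exp_one_lt_d9, Real.exp_pos (1/2 : ℝ)]
      have hexp : Real.exp ((p : ℝ) / 2) ≤ 2 ^ p := by
        have : Real.exp ((p : ℝ) / 2) = Real.exp (1/2) ^ p := by
          rw [← Real.exp_nat_mul]; ring_nf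
        rw [this]
        exact pow_le_pow_left₀ (Real.exp_pos _).le hehalf p
      have h2p : (2:ℝ) ≤ 2 ^ p := le_self_pow₀ (by norm_num) hp0
      have hmain : 2 * (p.factorial : ℝ) * Real.exp ((p:ℝ) / 2) ≤ 4 ^ p * (p:ℝ) ^ p := by
        have h4 : (4:ℝ) ^ p = 2 ^ p * 2 ^ p := by rw [← mul_pow]; norm_num
        have hf : (0:ℝ) ≤ (p.factorial : ℝ) := by positivity
        have he : (0:ℝ) ≤ Real.exp ((p:ℝ)/2) := (Real.exp_pos _).le
        have s1 : 2 * (p.factorial : ℝ) ≤ 2 ^ p * (p:ℝ) ^ p :=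
          mul_le_mul h2p hfact hf (by positivity)
        have s2 : 2 * (p.factorial : ℝ) * Real.exp ((p:ℝ)/2)
            ≤ (2 ^ p * (p:ℝ) ^ p) * 2 ^ p := mul_le_mul s1 hexp he (by positivity)
        calc 2 * (p.factorial : ℝ) * Real.exp ((p:ℝ) / 2)
            ≤ (2 ^ p * (p:ℝ) ^ p) * 2 ^ p := s2
          _ = 4 ^ p * (p:ℝ) ^ p := by rw [h4]; ring
      rw [hlp, div_div_eq_mul_div]
      rw [div_mul_eq_mul_div, div_le_iff₀ hupos]
      have hexpand : (4 * Real.sqrt p * Real.sqrt σ2) ^ p = 4 ^ p * u * v := by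
        rw [hu, hv, mul_pow, mul_pow]
      rw [hexpand]
      have : 2 * (p.factorial : ℝ) * Real.exp ((p:ℝ) / 2) * v ≤ 4 ^ p * (p:ℝ) ^ p * v :=
        mul_le_mul_of_nonneg_right hmain hvpos.le
      calc (p.factorial : ℝ) * v * (2 ^ (n + 1) * Real.exp ((p:ℝ) / 2))
          = (2 * (p.factorial : ℝ) * Real.exp ((p:ℝ) / 2) * v) * 2 ^ n := by
            rw [pow_succ]; ring
        _ ≤ (4 ^ p * (p:ℝ) ^ p * v) * 2 ^ n := by
            apply mul_le_mul_of_nonneg_right this (by positivity)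
        _ = 4 ^ p * u * v * 2 ^ n * u := by rw [← huu]; ring
    exact moment_root_le hC hp0 hkey hXnn

/-- `J` is the greedy partition of `I` into blocks of (at most) `p` indices, ordered by
decreasing values of `|a i|`: `J 0` holds the indices of the `p` largest `|a i|`, `i ∈ I`,
`J 1` the next `p` largest, and so on. -/
def IsGreedyPartition {n : ℕ} (a : Fin n → ℝ) (I : Finset (Fin n)) (p : ℕ)
    (J : ℕ → Finset (Fin n)) : Prop :=
  (∀ ℓ, J ℓ ⊆ I) ∧
  (∀ ℓ ℓ', ℓ ≠ ℓ' → Disjoint (J ℓ) (J ℓ')) ∧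
  (∀ i ∈ I, ∃ ℓ, i ∈ J ℓ) ∧
  (∀ ℓ, (J ℓ).card ≤ p) ∧
  (∀ ℓ, (J (ℓ + 1)).Nonempty → (J ℓ).card = p) ∧
  (∀ ℓ, ∀ i ∈ J (ℓ + 1), ∀ j ∈ J ℓ, |a i| ≤ |a j|)

/-- **Moment bound for Rademacher sums (Lemma 2.?).** There is an absolute constant `c` such
that for all `a, b ∈ ℝⁿ`, `p ≥ 1`, `I ⊆ {1,…,n}` and the greedy partition `I = ⋃ₗ Iₗ` by
decreasing `|a i|` into blocks of size `p`,
`(E |Σ_{i∈I} ε_i a_i b_i|^p)^{1/p} ≤ c ‖a‖₂ maxₗ ‖proj_{Iₗ} b‖₂`,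
the expectation being over independent Rademacher signs `ε`. -/
theorem bernoulli_process_moment_bound :
    ∃ c : ℝ, 0 < c ∧
      ∀ (n : ℕ) (a b : Fin n → ℝ) (I : Finset (Fin n)) (p : ℕ), 1 ≤ p →
        ∀ J : ℕ → Finset (Fin n), IsGreedyPartition a I p J →
          ((∑ ε : Fin n → Bool,
              |∑ i ∈ I, (if ε i then (1:ℝ) else -1) * a i * b i| ^ (p : ℝ)) / 2 ^ n)
              ^ (p : ℝ)⁻¹
            ≤ c * Real.sqrt (∑ i : Fin n, a i ^ 2) *
                ⨆ ℓ : ℕ, Real.sqrt (∑ i ∈ J ℓ, b i ^ 2) := by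
  classical
  refine ⟨5, by norm_num, ?_⟩
  intro n a b I p hp J hJ
  obtain ⟨hsub, hdisj, hcov, hcard, hfull, hmono⟩ := hJ
  have hp0 : p ≠ 0 := by omega
  set A : ℝ := Real.sqrt (∑ i : Fin n, a i ^ 2) with hA
  set M : ℝ := ⨆ ℓ : ℕ, Real.sqrt (∑ i ∈ J ℓ, b i ^ 2) with hM
  have hbdd : BddAbove (Set.range fun ℓ : ℕ => Real.sqrt (∑ i ∈ J ℓ, b i ^ 2)) := by
    refine ⟨Real.sqrt (∑ i : Fin n, b i ^ 2), ?_⟩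
    rintro r ⟨ℓ, rfl⟩
    exact Real.sqrt_le_sqrt (Finset.sum_le_sum_of_subset_of_nonneg (Finset.subset_univ _)
      (fun i _ _ => sq_nonneg _))
  have hMle : ∀ ℓ, Real.sqrt (∑ i ∈ J ℓ, b i ^ 2) ≤ M := fun ℓ => le_ciSup hbdd ℓ
  have hM0 : 0 ≤ M := (Real.sqrt_nonneg _).trans (hMle 0)
  have hA0 : 0 ≤ A := Real.sqrt_nonneg _
  have hMsq : ∀ ℓ, (∑ i ∈ J ℓ, b i ^ 2) ≤ M ^ 2 := by
    intro ℓ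
    have h1 : (∑ i ∈ J ℓ, b i ^ 2) = Real.sqrt (∑ i ∈ J ℓ, b i ^ 2) ^ 2 :=
      (Real.sq_sqrt (Finset.sum_nonneg fun i _ => sq_nonneg _)).symm
    rw [h1]
    exact pow_le_pow_left₀ (Real.sqrt_nonneg _) (hMle ℓ) 2
  -- chain : previous blocks are nonempty
  have hchain : ∀ d k, (J (k + d)).Nonempty → (J k).Nonempty := by
    intro d
    induction d with
    | zero => exact fun k h => h
    | succ d ih =>
      intro k h
      have h1 : (J (k + 1)).Nonempty := ih (k + 1) (by rwa [show k + 1 + d = k + (d + 1) by omega])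
      have h2 := hfull k h1
      rw [← Finset.card_pos, h2]; omega
  have hle : ∀ ℓ, (J ℓ).Nonempty → ℓ ≤ I.card := by
    intro ℓ hne
    have hnonempty : ∀ k < ℓ, (J k).Nonempty := fun k hk =>
      hchain (ℓ - k) k (by rwa [show k + (ℓ - k) = ℓ by omega])
    calc ℓ = ∑ _k ∈ Finset.range ℓ, 1 := by simp
      _ ≤ ∑ k ∈ Finset.range ℓ, (J k).card :=
        Finset.sum_le_sum fun k hk => Finset.card_pos.2 (hnonempty k (Finset.mem_range.1 hk))
      _ = ((Finset.range ℓ).biUnion J).card :=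
        (Finset.card_biUnion fun x _ y _ hxy => hdisj x y hxy).symm
      _ ≤ I.card := Finset.card_le_card (Finset.biUnion_subset.2 fun k _ => hsub k)
  set N := I.card with hN
  have hcover : I \ J 0 = (Finset.range N).biUnion (fun ℓ => J (ℓ + 1)) := by
    ext i
    simp only [Finset.mem_sdiff, Finset.mem_biUnion, Finset.mem_range]
    constructor
    · rintro ⟨hiI, hi0⟩
      obtain ⟨ℓ, hℓ⟩ := hcov i hiI
      match ℓ, hℓ with
      | 0, h => exact absurd h hi0
      | m + 1, h =>
        refine ⟨m, ?_, h⟩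
        have := hle (m + 1) ⟨i, h⟩
        omega
    · rintro ⟨m, _, hm⟩
      exact ⟨hsub (m + 1) hm,
        fun h0 => (Finset.disjoint_left.1 (hdisj (m + 1) 0 (by omega))) hm h0⟩
  have hpd : Set.PairwiseDisjoint ↑(Finset.range N) (fun ℓ => J (ℓ + 1)) :=
    fun x _ y _ hxy => hdisj (x + 1) (y + 1) (by omega)
  set F : (Fin n → Bool) → ℝ :=
    fun ε => ∑ i ∈ J 0, (if ε i then (1:ℝ) else -1) * a i * b i with hF
  set G : (Fin n → Bool) → ℝ :=
    fun ε => ∑ i ∈ I \ J 0, (if ε i then (1:ℝ) else -1) * a i * b i with hG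
  have hsplit : ∀ ε : Fin n → Bool,
      ∑ i ∈ I, (if ε i then (1:ℝ) else -1) * a i * b i = F ε + G ε := by
    intro ε
    rw [hF, hG, ← Finset.sum_sdiff (hsub 0), add_comm]
  have h1p : (1:ℝ) ≤ (p:ℝ) := by exact_mod_cast hp
  have h2n : (0:ℝ) < 2 ^ n := by positivity
  have hFnn : 0 ≤ ∑ ε : Fin n → Bool, |F ε| ^ (p:ℝ) :=
    Finset.sum_nonneg fun ε _ => Real.rpow_nonneg (abs_nonneg _) _
  have hGnn : 0 ≤ ∑ ε : Fin n → Bool, |G ε| ^ (p:ℝ) :=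
    Finset.sum_nonneg fun ε _ => Real.rpow_nonneg (abs_nonneg _) _
  have hFGnn : 0 ≤ ∑ ε : Fin n → Bool, |F ε + G ε| ^ (p:ℝ) :=
    Finset.sum_nonneg fun ε _ => Real.rpow_nonneg (abs_nonneg _) _
  -- Minkowski
  have hmink : ((∑ ε : Fin n → Bool, |F ε + G ε| ^ (p:ℝ)) / 2 ^ n) ^ ((p:ℝ)⁻¹)
      ≤ ((∑ ε : Fin n → Bool, |F ε| ^ (p:ℝ)) / 2 ^ n) ^ ((p:ℝ)⁻¹)
        + ((∑ ε : Fin n → Bool, |G ε| ^ (p:ℝ)) / 2 ^ n) ^ ((p:ℝ)⁻¹) := by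
    have hmk := Real.Lp_add_le Finset.univ F G h1p
    rw [Real.div_rpow hFGnn h2n.le, Real.div_rpow hFnn h2n.le, Real.div_rpow hGnn h2n.le,
      ← add_div]
    apply div_le_div_of_nonneg_right ?_ (by positivity)
    · simpa [one_div] using hmk
  -- first block : deterministic bound
  have hFbound : ∀ ε : Fin n → Bool, |F ε| ≤ A * M := by
    intro ε
    calc |F ε| ≤ ∑ i ∈ J 0, |a i| * |b i| := by
          refine (Finset.abs_sum_le_sum_abs _ _).trans (le_of_eq ?_)
          refine Finset.sum_congr rfl fun i _ => ?_
          rw [abs_mul, abs_mul]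
          split_ifs <;> simp
      _ ≤ Real.sqrt (∑ i ∈ J 0, |a i| ^ 2) * Real.sqrt (∑ i ∈ J 0, |b i| ^ 2) :=
          Real.sum_mul_le_sqrt_mul_sqrt _ _ _
      _ = Real.sqrt (∑ i ∈ J 0, a i ^ 2) * Real.sqrt (∑ i ∈ J 0, b i ^ 2) := by
          simp [sq_abs]
      _ ≤ A * M := by
          refine mul_le_mul ?_ (hMle 0) (Real.sqrt_nonneg _) hA0
          exact Real.sqrt_le_sqrt (Finset.sum_le_sum_of_subset_of_nonneg
            (Finset.subset_univ _) (fun i _ _ => sq_nonneg _))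
  have hB1 : ((∑ ε : Fin n → Bool, |F ε| ^ (p:ℝ)) / 2 ^ n) ^ ((p:ℝ)⁻¹) ≤ A * M := by
    refine moment_root_le (by positivity) hp0 ?_ hFnn
    rw [div_le_iff₀ h2n]
    calc ∑ ε : Fin n → Bool, |F ε| ^ (p:ℝ)
        ≤ ∑ _ε : Fin n → Bool, (A * M) ^ (p:ℝ) :=
          Finset.sum_le_sum fun ε _ =>
            Real.rpow_le_rpow (abs_nonneg _) (hFbound ε) (by positivity)
      _ = (A * M) ^ p * 2 ^ n := by
          rw [Finset.sum_const, Finset.card_univ, Fintype.card_fun]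
          rw [Real.rpow_natCast, nsmul_eq_mul]
          push_cast [Fintype.card_bool, Fintype.card_fin]
          ring
  -- second part : Khintchine
  have hB2 := khintchine (fun i => a i * b i) (I \ J 0) hp
  simp only [← mul_assoc] at hB2
  have hsum2 : (p:ℝ) * ∑ i ∈ I \ J 0, (a i * b i) ^ 2 ≤ (∑ i : Fin n, a i ^ 2) * M ^ 2 := by
    rw [hcover, Finset.sum_biUnion hpd]
    have hinner : ∀ ℓ ∈ Finset.range N,
        (p:ℝ) * ∑ i ∈ J (ℓ + 1), (a i * b i) ^ 2 ≤ (∑ j ∈ J ℓ, a j ^ 2) * M ^ 2 := by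
      intro ℓ _
      have hstep : ∀ i ∈ J (ℓ + 1), (p:ℝ) * (a i * b i) ^ 2
          ≤ (∑ j ∈ J ℓ, a j ^ 2) * b i ^ 2 := by
        intro i hi
        have hcardp : (J ℓ).card = p := hfull ℓ ⟨i, hi⟩
        have hmaj : ∀ j ∈ J ℓ, a i ^ 2 ≤ a j ^ 2 := by
          intro j hj
          have h := hmono ℓ i hi j hj
          calc a i ^ 2 = |a i| ^ 2 := (sq_abs _).symm
            _ ≤ |a j| ^ 2 := pow_le_pow_left₀ (abs_nonneg _) h 2
            _ = a j ^ 2 := sq_abs _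
        have hnsmul := Finset.card_nsmul_le_sum (J ℓ) (fun j => a j ^ 2) (a i ^ 2) hmaj
        rw [hcardp, nsmul_eq_mul] at hnsmul
        calc (p:ℝ) * (a i * b i) ^ 2 = ((p:ℝ) * a i ^ 2) * b i ^ 2 := by ring
          _ ≤ (∑ j ∈ J ℓ, a j ^ 2) * b i ^ 2 :=
            mul_le_mul_of_nonneg_right hnsmul (sq_nonneg _)
      calc (p:ℝ) * ∑ i ∈ J (ℓ + 1), (a i * b i) ^ 2
          = ∑ i ∈ J (ℓ + 1), (p:ℝ) * (a i * b i) ^ 2 := Finset.mul_sum _ _ _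
        _ ≤ ∑ i ∈ J (ℓ + 1), (∑ j ∈ J ℓ, a j ^ 2) * b i ^ 2 := Finset.sum_le_sum hstep
        _ = (∑ j ∈ J ℓ, a j ^ 2) * ∑ i ∈ J (ℓ + 1), b i ^ 2 := (Finset.mul_sum _ _ _).symm
        _ ≤ (∑ j ∈ J ℓ, a j ^ 2) * M ^ 2 :=
            mul_le_mul_of_nonneg_left (hMsq (ℓ + 1))
              (Finset.sum_nonneg fun j _ => sq_nonneg _)
    calc (p:ℝ) * ∑ ℓ ∈ Finset.range N, ∑ i ∈ J (ℓ + 1), (a i * b i) ^ 2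
        = ∑ ℓ ∈ Finset.range N, (p:ℝ) * ∑ i ∈ J (ℓ + 1), (a i * b i) ^ 2 :=
          Finset.mul_sum _ _ _
      _ ≤ ∑ ℓ ∈ Finset.range N, (∑ j ∈ J ℓ, a j ^ 2) * M ^ 2 := Finset.sum_le_sum hinner
      _ = (∑ ℓ ∈ Finset.range N, ∑ j ∈ J ℓ, a j ^ 2) * M ^ 2 := (Finset.sum_mul _ _ _).symm
      _ ≤ (∑ i : Fin n, a i ^ 2) * M ^ 2 := by
          refine mul_le_mul_of_nonneg_right ?_ (sq_nonneg M)
          rw [← Finset.sum_biUnion (fun x _ y _ hxy => hdisj x y hxy)]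
          exact Finset.sum_le_sum_of_subset_of_nonneg (Finset.subset_univ _)
            (fun i _ _ => sq_nonneg _)
  have h4 : 4 * Real.sqrt p * Real.sqrt (∑ i ∈ I \ J 0, (a i * b i) ^ 2) ≤ 4 * (A * M) := by
    rw [mul_assoc]
    refine mul_le_mul_of_nonneg_left ?_ (by norm_num)
    calc Real.sqrt p * Real.sqrt (∑ i ∈ I \ J 0, (a i * b i) ^ 2)
        = Real.sqrt ((p:ℝ) * ∑ i ∈ I \ J 0, (a i * b i) ^ 2) :=
          (Real.sqrt_mul (by positivity) _).symm
      _ ≤ Real.sqrt ((∑ i : Fin n, a i ^ 2) * M ^ 2) := Real.sqrt_le_sqrt hsum2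
      _ = A * M := by
          rw [Real.sqrt_mul (Finset.sum_nonneg fun i _ => sq_nonneg _), Real.sqrt_sq hM0]
  have hB2' : ((∑ ε : Fin n → Bool, |G ε| ^ (p:ℝ)) / 2 ^ n) ^ ((p:ℝ)⁻¹) ≤ 4 * (A * M) :=
    hB2.trans h4
  calc ((∑ ε : Fin n → Bool,
          |∑ i ∈ I, (if ε i then (1:ℝ) else -1) * a i * b i| ^ (p : ℝ)) / 2 ^ n) ^ (p : ℝ)⁻¹
      = ((∑ ε : Fin n → Bool, |F ε + G ε| ^ (p:ℝ)) / 2 ^ n) ^ ((p:ℝ)⁻¹) := by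
        congr 2
        exact Finset.sum_congr rfl fun ε _ => by rw [hsplit ε]
    _ ≤ ((∑ ε : Fin n → Bool, |F ε| ^ (p:ℝ)) / 2 ^ n) ^ ((p:ℝ)⁻¹)
          + ((∑ ε : Fin n → Bool, |G ε| ^ (p:ℝ)) / 2 ^ n) ^ ((p:ℝ)⁻¹) := hmink
    _ ≤ A * M + 4 * (A * M) := add_le_add hB1 hB2'
    _ = 5 * A * M := by ring
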